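/- Let μ₀ > 0 with μ₀ ≠ 50, ω₀ = √(7μ₀), δ₀ = 5/(3μ₀), and define B : ℂ⁴ × ℂ⁴ → ℂ⁴ by B(u,v) = (0, −δ₀(u₁v₂ + u₂v₁) − u₂v₂, 0, δ₀(u₁v₂ + u₂v₁)). Let q₀ = (3(μ₀ + iω₀), −10, 0, −5μ₀ + iω₀(2+μ₀)), p₀ = (2μ₀ + iω₀(5+μ₀), −150 + 3μ₀, 0, −3μ₀ + 3iω₀), and v₀ = (−30μ₀/(μ₀−50), 100/(μ₀−50), 0, −20μ₀/(μ₀−50)). Then B₂(q₀,v₀) = −500iω₀/(μ₀(μ₀−50)), B₄(q₀,v₀) = 500(2μ₀ + iω₀)/(μ₀(μ₀−50)), and the Hermitian inner product ⟨p₀, B(q₀,v₀)⟩ = Σₖ conj((p₀)ₖ)Bₖ(q₀,v₀) equals −1500·(2μ₀² − 7μ₀ + iω₀(4μ₀ − 50))/(μ₀(μ₀−50)). -/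

import Mathlib

open Finset

/-- Values of `B₂(q₀,v₀)`, `B₄(q₀,v₀)` and of the Hermitian inner product
`⟨p₀, B(q₀,v₀)⟩ = −1500(2μ₀² − 7μ₀ + iω₀(4μ₀ − 50))/(μ₀(μ₀−50))`. -/
theorem stmt_15 (μ₀ ω₀ δ₀ : ℝ) (hμ : 0 < μ₀) (hμ' : μ₀ ≠ 50)
    (hω : ω₀ = Real.sqrt (7 * μ₀)) (hδ : δ₀ = 5 / (3 * μ₀))
    (B : (Fin 4 → ℂ) → (Fin 4 → ℂ) → (Fin 4 → ℂ))
    (hB : ∀ u v, B u v =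
      ![0, -(δ₀ : ℂ) * (u 0 * v 1 + u 1 * v 0) - u 1 * v 1, 0,
        (δ₀ : ℂ) * (u 0 * v 1 + u 1 * v 0)])
    (q₀ p₀ v₀ : Fin 4 → ℂ)
    (hq : q₀ = ![3 * ((μ₀ : ℂ) + Complex.I * (ω₀ : ℂ)), -10, 0,
                 -5 * (μ₀ : ℂ) + Complex.I * (ω₀ : ℂ) * (2 + (μ₀ : ℂ))])
    (hp : p₀ = ![2 * (μ₀ : ℂ) + Complex.I * (ω₀ : ℂ) * (5 + (μ₀ : ℂ)),
                 -150 + 3 * (μ₀ : ℂ), 0,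
                 -3 * (μ₀ : ℂ) + 3 * Complex.I * (ω₀ : ℂ)])
    (hv : v₀ = ![-30 * (μ₀ : ℂ) / ((μ₀ : ℂ) - 50), 100 / ((μ₀ : ℂ) - 50), 0,
                 -20 * (μ₀ : ℂ) / ((μ₀ : ℂ) - 50)]) :
    B q₀ v₀ 1 = -500 * Complex.I * (ω₀ : ℂ) / ((μ₀ : ℂ) * ((μ₀ : ℂ) - 50)) ∧
    B q₀ v₀ 3 = 500 * (2 * (μ₀ : ℂ) + Complex.I * (ω₀ : ℂ))
        / ((μ₀ : ℂ) * ((μ₀ : ℂ) - 50)) ∧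
    (∑ k, (starRingEnd ℂ) (p₀ k) * B q₀ v₀ k)
      = -1500 * (2 * (μ₀ : ℂ) ^ 2 - 7 * (μ₀ : ℂ)
          + Complex.I * (ω₀ : ℂ) * (4 * (μ₀ : ℂ) - 50))
        / ((μ₀ : ℂ) * ((μ₀ : ℂ) - 50)) := by

  have hμ0 : (μ₀ : ℂ) ≠ 0 := by exact_mod_cast hμ.ne'
  have hμ50 : (μ₀ : ℂ) - 50 ≠ 0 := by
    intro h
    apply hμ'
    have : (μ₀ : ℂ) = 50 := by linear_combination h
    exact_mod_cast this
  have hω2 : (ω₀ : ℂ) ^ 2 = 7 * (μ₀ : ℂ) := by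
    have : ω₀ ^ 2 = 7 * μ₀ := by
      rw [hω, Real.sq_sqrt]; positivity
    exact_mod_cast this
  have hδ' : (δ₀ : ℂ) = 5 / (3 * (μ₀ : ℂ)) := by
    rw [hδ]; push_cast; ring
  subst hq hp hv
  rw [hB]
  simp only [Matrix.cons_val_zero, Matrix.cons_val_one, Matrix.head_cons,
    Matrix.cons_val_fin_one, Fin.sum_univ_four, Matrix.cons_val_two,
    Matrix.tail_cons, Matrix.cons_val_three, map_add, map_mul, map_sub, map_neg,
    map_ofNat, Complex.conj_I, Complex.conj_ofReal, map_one]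
  refine ⟨?_, ?_, ?_⟩
  · rw [hδ']
    field_simp
    ring
  · rw [hδ']
    field_simp
    ring
  · rw [hδ']
    field_simp
    linear_combination (4500 : ℂ) * hω2
      - (4500 * (ω₀ : ℂ) ^ 2) * Complex.I_sq
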